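/- Let n be even and suppose K_n admits a perfect one-factorization F₁,...,F_{n-1}. Then for each t ≤ n-3, the edge-colored graph G on vertex set V = {v₁,...,v_{n-1}} with edge set E = F₁' ∪ ... ∪ F'_{t+2}, where F'_i is F_i with the edge incident to v_n removed and all edges of F'_i colored c_i, is (t+1)-color connected, has n-1 vertices, and has exactly (t+2)(n/2 - 1) edges. -/

import Mathlib

private lemma even_card_of_invol {α : Type*} [DecidableEq α] (f : α → α) (s : Finset α) :
    (∀ a ∈ s, f a ∈ s) → (∀ a ∈ s, f (f a) = a) → (∀ a ∈ s, f a ≠ a) → Even s.card := by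
  induction s using Finset.strongInduction with
  | _ s ih =>
    intro h1 h2 h3
    rcases s.eq_empty_or_nonempty with rfl | ⟨a, ha⟩
    · simp
    have hfa := h1 a ha
    have hne := h3 a ha
    have hmem : ∀ x, x ∈ (s.erase a).erase (f a) ↔ x ≠ f a ∧ x ≠ a ∧ x ∈ s := by
      intro x; simp [Finset.mem_erase]
    have hsub : (s.erase a).erase (f a) ⊂ s :=
      Finset.ssubset_of_subset_of_ssubset (Finset.erase_subset _ _) (Finset.erase_ssubset ha)
    have h1' : ∀ x ∈ (s.erase a).erase (f a), f x ∈ (s.erase a).erase (f a) := by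
      intro x hx
      rw [hmem] at hx
      obtain ⟨hx1, hx2, hx3⟩ := hx
      rw [hmem]
      refine ⟨?_, ?_, h1 x hx3⟩
      · intro h
        apply hx2
        have := congrArg f h
        rwa [h2 x hx3, h2 a ha] at this
      · intro h
        apply hx1
        have := h2 x hx3
        rw [h] at this
        exact this.symm
    have hind := ih _ hsub h1' (fun x hx => h2 x ((hmem x).mp hx).2.2)
      (fun x hx => h3 x ((hmem x).mp hx).2.2)
    have hfa' : f a ∈ s.erase a := Finset.mem_erase.mpr ⟨hne, hfa⟩
    have hc : ((s.erase a).erase (f a)).card = s.card - 1 - 1 := by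
      rw [Finset.card_erase_of_mem hfa', Finset.card_erase_of_mem ha]
    have h2le : 2 ≤ s.card := Finset.one_lt_card.mpr ⟨a, ha, f a, hfa, Ne.symm hne⟩
    obtain ⟨k, hk⟩ := hind
    exact ⟨k + 1, by omega⟩

/-- From a perfect one-factorization F₁,…,F_{n-1} of K_n (n even): each F_i is a
perfect matching, the F_i partition the edges, and the union of any two distinct
one-factors is a Hamiltonian circuit (formalized by: that union is connected, which
for a union of two perfect matchings is equivalent to being a Hamiltonian cycle).
Then for t ≤ n-3, the edge-colored graph on the n-1 vertices ≠ v_n whose edges are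
those of F₁,…,F_{t+2} not incident to v_n (edges of F_i colored by i) has exactly
(t+2)(n/2-1) edges and is (t+1)-color connected. -/
theorem stmt9 (n t : ℕ) (hn : Even n) (ht : t + 3 ≤ n)
    (F : Fin (n - 1) → Finset (Sym2 (Fin n)))
    (hloop : ∀ i, ∀ e ∈ F i, ¬ e.IsDiag)
    (hmatch : ∀ i, ∀ v : Fin n, ∃! e, e ∈ F i ∧ v ∈ e)
    (hpart : ∀ e : Sym2 (Fin n), ¬ e.IsDiag → ∃! i, e ∈ F i)
    (hperfect : ∀ i j : Fin (n - 1), i ≠ j → ∀ a b : Fin n,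
        Relation.ReflTransGen (fun x y => s(x, y) ∈ F i ∨ s(x, y) ∈ F j) a b) :
    Nat.card {q : Fin (n - 1) × Sym2 (Fin n) //
        (q.1 : ℕ) < t + 2 ∧ q.2 ∈ F q.1 ∧ (⟨n - 1, by omega⟩ : Fin n) ∉ q.2}
      = (t + 2) * (n / 2 - 1) ∧
    ∀ D : Finset (Fin (n - 1)), D.card = t →
      ∀ a b : Fin n, a ≠ (⟨n - 1, by omega⟩ : Fin n) → b ≠ (⟨n - 1, by omega⟩ : Fin n) →
        Relation.ReflTransGen
          (fun x y => ∃ c : Fin (n - 1), ∃ e ∈ F c, (c : ℕ) < t + 2 ∧ c ∉ D ∧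
            (⟨n - 1, by omega⟩ : Fin n) ∉ e ∧ e = s(x, y)) a b := by
  classical
  set w : Fin n := ⟨n - 1, by omega⟩ with hw
  -- each factor has n/2 edges
  have hcard : ∀ i, (F i).card = n / 2 := by
    intro i
    choose g hg1 hg2 using fun v => (hmatch i v).exists
    have hkey : (Finset.univ : Finset (Fin n)).card
        = ∑ e ∈ F i, ((Finset.univ : Finset (Fin n)).filter fun v => g v = e).card :=
      Finset.card_eq_sum_card_fiberwise (fun v _ => hg1 v)
    have hfib : ∀ e ∈ F i,
        ((Finset.univ : Finset (Fin n)).filter fun v => g v = e).card = 2 := by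
      intro e he
      have hset : (Finset.univ.filter fun v => g v = e)
          = Finset.univ.filter fun v => v ∈ e := by
        ext v
        simp only [Finset.mem_filter, Finset.mem_univ, true_and]
        constructor
        · rintro rfl; exact hg2 v
        · intro hv
          exact (hmatch i v).unique ⟨hg1 v, hg2 v⟩ ⟨he, hv⟩
      rw [hset]
      have hnd := hloop i e he
      clear hset he
      induction e using Sym2.ind with
      | _ x y =>
        rw [Sym2.mk_isDiag_iff] at hnd
        have : (Finset.univ.filter fun v => v ∈ s(x, y)) = {x, y} := by
          ext v; simp [Sym2.mem_iff]
        rw [this, Finset.card_pair hnd]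
    rw [Finset.sum_congr rfl hfib, Finset.sum_const, Finset.card_univ, Fintype.card_fin,
      smul_eq_mul] at hkey
    omega
  -- each factor has n/2 - 1 edges avoiding w
  have hwcard : ∀ i : Fin (n - 1), ((F i).filter (fun e => w ∉ e)).card = n / 2 - 1 := by
    intro i
    obtain ⟨e₀, ⟨he₀F, he₀w⟩, he₀u⟩ := hmatch i w
    have hfil : (F i).filter (fun e => w ∈ e) = {e₀} := by
      ext e'
      simp only [Finset.mem_filter, Finset.mem_singleton]
      constructor
      · rintro ⟨hh1, hh2⟩; exact he₀u e' ⟨hh1, hh2⟩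
      · rintro rfl; exact ⟨he₀F, he₀w⟩
    have hsub : {e₀} ⊆ F i := Finset.singleton_subset_iff.mpr he₀F
    rw [Finset.filter_not, hfil, Finset.card_sdiff_of_subset hsub, hcard i, Finset.card_singleton]
  -- the color set
  set T : Finset (Fin (n - 1)) := Finset.univ.filter (fun i => (i : ℕ) < t + 2) with hTdef
  have hT : T.card = t + 2 := by
    apply Finset.card_eq_of_bijective (fun j hj => (⟨j, by omega⟩ : Fin (n - 1)))
    · intro a haT
      exact ⟨a.val, (Finset.mem_filter.mp haT).2, rfl⟩
    · intro i hi
      exact Finset.mem_filter.mpr ⟨Finset.mem_univ _, hi⟩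
    · intro i j hi hj h
      simpa using h
  constructor
  · -- counting
    rw [Nat.card_eq_fintype_card, Fintype.card_subtype]
    have hsum : (Finset.univ.filter fun q : Fin (n - 1) × Sym2 (Fin n) =>
          (q.1 : ℕ) < t + 2 ∧ q.2 ∈ F q.1 ∧ w ∉ q.2).card
        = ∑ i ∈ T, ((Finset.univ.filter fun q : Fin (n - 1) × Sym2 (Fin n) =>
          (q.1 : ℕ) < t + 2 ∧ q.2 ∈ F q.1 ∧ w ∉ q.2).filter fun q => q.1 = i).card := by
      apply Finset.card_eq_sum_card_fiberwise
      intro q hq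
      exact Finset.mem_filter.mpr ⟨Finset.mem_univ _, (Finset.mem_filter.mp hq).2.1⟩
    rw [hsum]
    have hfib2 : ∀ i ∈ T, ((Finset.univ.filter fun q : Fin (n - 1) × Sym2 (Fin n) =>
          (q.1 : ℕ) < t + 2 ∧ q.2 ∈ F q.1 ∧ w ∉ q.2).filter fun q => q.1 = i).card
        = n / 2 - 1 := by
      intro i hiT
      have hi2 := (Finset.mem_filter.mp hiT).2
      have himg : ((Finset.univ.filter fun q : Fin (n - 1) × Sym2 (Fin n) =>
            (q.1 : ℕ) < t + 2 ∧ q.2 ∈ F q.1 ∧ w ∉ q.2).filter fun q => q.1 = i)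
          = ((F i).filter fun e => w ∉ e).map
              ⟨fun e => (i, e), fun a b h => by simpa using h⟩ := by
        ext q
        simp only [Finset.mem_filter, Finset.mem_univ, true_and, Finset.mem_map,
          Function.Embedding.coeFn_mk]
        constructor
        · rintro ⟨⟨h1, h2, h3⟩, h4⟩
          refine ⟨q.2, ⟨by rwa [h4] at h2, h3⟩, ?_⟩
          exact Prod.ext h4.symm rfl
        · rintro ⟨e, ⟨he1, he2⟩, rfl⟩
          exact ⟨⟨hi2, he1, he2⟩, rfl⟩
      rw [himg, Finset.card_map, hwcard i]
    rw [Finset.sum_congr rfl hfib2, Finset.sum_const, hT, smul_eq_mul]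
  · -- connectivity
    -- matching partner functions
    have key : ∀ c : Fin (n - 1), ∀ v : Fin n,
        ∃ u, s(v, u) ∈ F c ∧ u ≠ v ∧ ∀ u', s(v, u') ∈ F c → u' = u := by
      intro c v
      obtain ⟨e, ⟨heF, hev⟩, huniq⟩ := hmatch c v
      have hos := Sym2.other_spec hev
      have hne : Sym2.Mem.other hev ≠ v := by
        intro h
        apply hloop c e heF
        rw [← hos, h]
        exact Sym2.mk_isDiag_iff.mpr rfl
      refine ⟨Sym2.Mem.other hev, by rw [hos]; exact heF, hne, ?_⟩
      intro u' hu'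
      have he' : s(v, u') = e := huniq s(v, u') ⟨hu', Sym2.mem_mk_left v u'⟩
      rw [← hos] at he'
      rcases Sym2.eq_iff.mp he' with ⟨_, h⟩ | ⟨h1, h2⟩
      · exact h
      · exact absurd h1.symm hne
    choose m hm1 hm2 hm3 using key
    have hinv : ∀ c v, m c (m c v) = v := by
      intro c v
      have h2 : s(m c v, v) ∈ F c := by rw [Sym2.eq_swap]; exact hm1 c v
      exact (hm3 c (m c v) v h2).symm
    intro D hD a b ha hb
    set Rel := fun x y : Fin n => ∃ c : Fin (n - 1), ∃ e ∈ F c,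
        (c : ℕ) < t + 2 ∧ c ∉ D ∧ w ∉ e ∧ e = s(x, y) with hReldef
    obtain ⟨c₁, hc₁, c₂, hc₂, hc12⟩ : ∃ c₁ ∈ T \ D, ∃ c₂ ∈ T \ D, c₁ ≠ c₂ := by
      apply Finset.one_lt_card.mp
      have := Finset.le_card_sdiff D T
      omega
    have hcT : ∀ c ∈ T \ D, (c : ℕ) < t + 2 ∧ c ∉ D := by
      intro c hc
      obtain ⟨hc1, hc2⟩ := Finset.mem_sdiff.mp hc
      exact ⟨(Finset.mem_filter.mp hc1).2, hc2⟩
    have hstep : ∀ c ∈ T \ D, ∀ x : Fin n, x ≠ w → m c x ≠ w → Rel x (m c x) := by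
      intro c hc x hx hmx
      obtain ⟨hcc1, hcc2⟩ := hcT c hc
      refine ⟨c, s(x, m c x), hm1 c x, hcc1, hcc2, ?_, rfl⟩
      rw [Sym2.mem_iff]
      push_neg
      exact ⟨Ne.symm hx, Ne.symm hmx⟩
    have hsym : Symmetric Rel := by
      rintro x y ⟨c, e, he, hh1, hh2, hh3, hh4⟩
      exact ⟨c, e, he, hh1, hh2, hh3, by rw [hh4, Sym2.eq_swap]⟩
    set P : Finset (Fin n) :=
      Finset.univ.filter (fun x => x ≠ w ∧ Relation.ReflTransGen Rel (m c₁ w) x) with hPdef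
    have hu₁ : m c₁ w ∈ P :=
      Finset.mem_filter.mpr ⟨Finset.mem_univ _, hm2 c₁ w, Relation.ReflTransGen.refl⟩
    have hclosed : ∀ c ∈ T \ D, ∀ x ∈ P, m c x ≠ w → m c x ∈ P := by
      intro c hc x hx hmx
      obtain ⟨-, hxw, hxr⟩ := Finset.mem_filter.mp hx
      exact Finset.mem_filter.mpr ⟨Finset.mem_univ _, hmx,
        hxr.tail (hstep c hc x hxw hmx)⟩
    -- parity argument: m c₂ w is reachable
    have hu₂ : m c₂ w ∈ P := by
      by_contra hu2
      have hmc₂P : ∀ x ∈ P, m c₂ x ∈ P := by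
        intro x hx
        have hmxw : m c₂ x ≠ w := by
          intro h
          apply hu2
          have := hinv c₂ x
          rw [h] at this
          rwa [← this] at hx
        exact hclosed c₂ hc₂ x hx hmxw
      have heven := even_card_of_invol (m c₂) P hmc₂P (fun x _ => hinv c₂ x)
        (fun x _ => hm2 c₂ x)
      have hmc₁P' : ∀ x ∈ P.erase (m c₁ w), m c₁ x ∈ P.erase (m c₁ w) := by
        intro x hx
        obtain ⟨hxu, hxP⟩ := Finset.mem_erase.mp hx
        have hxw := (Finset.mem_filter.mp hxP).2.1
        have h1 : m c₁ x ≠ w := by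
          intro h
          apply hxu
          have := hinv c₁ x
          rw [h] at this
          exact this.symm
        have h2 : m c₁ x ∈ P := hclosed c₁ hc₁ x hxP h1
        have h3 : m c₁ x ≠ m c₁ w := by
          intro h
          apply hxw
          have := congrArg (m c₁) h
          rwa [hinv, hinv] at this
        exact Finset.mem_erase.mpr ⟨h3, h2⟩
      have hodd := even_card_of_invol (m c₁) (P.erase (m c₁ w)) hmc₁P'
        (fun x _ => hinv c₁ x) (fun x _ => hm2 c₁ x)
      have hcard1 : (P.erase (m c₁ w)).card = P.card - 1 := Finset.card_erase_of_mem hu₁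
      have hpos : 1 ≤ P.card := Finset.card_pos.mpr ⟨m c₁ w, hu₁⟩
      obtain ⟨k1, e1⟩ := heven
      obtain ⟨k2, e2⟩ := hodd
      omega
    -- every vertex ≠ w is in P
    have hall : ∀ y : Fin n,
        Relation.ReflTransGen (fun x y => s(x, y) ∈ F c₁ ∨ s(x, y) ∈ F c₂) w y →
        y = w ∨ y ∈ P := by
      intro y hy
      induction hy with
      | refl => exact Or.inl rfl
      | @tail y' z hyz hstepST ih =>
        have hz : z = m c₁ y' ∨ z = m c₂ y' := by
          rcases hstepST with h | h
          · exact Or.inl (hm3 c₁ y' z h)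
          · exact Or.inr (hm3 c₂ y' z h)
        rcases ih with rfl | hyP
        · rcases hz with rfl | rfl
          · exact Or.inr hu₁
          · exact Or.inr hu₂
        · by_cases hzw : z = w
          · exact Or.inl hzw
          · rcases hz with rfl | rfl
            · exact Or.inr (hclosed c₁ hc₁ y' hyP hzw)
            · exact Or.inr (hclosed c₂ hc₂ y' hyP hzw)
    have haP : a ∈ P := (hall a (hperfect c₁ c₂ hc12 w a)).resolve_left ha
    have hbP : b ∈ P := (hall b (hperfect c₁ c₂ hc12 w b)).resolve_left hb
    have hra := (Finset.mem_filter.mp haP).2.2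
    have hrb := (Finset.mem_filter.mp hbP).2.2
    haveI : Std.Symm Rel := ⟨fun _ _ h => hsym h⟩
    exact ((Relation.ReflTransGen.symmetric : Std.Symm (Relation.ReflTransGen Rel)).symm _ _ hra).trans hrb
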